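/- Let Ω ⊆ ℝ^n (n ≥ 2) be a nonempty open set and let c : Ω → ℝ be continuous with c ≥ 0 on Ω. Let u be continuous on the closure of Ω, twice continuously differentiable on Ω, and satisfy Δu ≥ c·u in Ω, u ≤ 0 on the frontier of Ω, and sup_Ω u < +∞. Suppose there exists a function φ, continuous on the closure of Ω and twice continuously differentiable on Ω, such that Δφ ≤ c·φ in Ω, φ > 0 on the closure of Ω, and for every ε > 0 there exists R > 0 such that u(x) ≤ ε·φ(x) for every x ∈ Ω with ‖x‖ ≥ R. Then u ≤ 0 on Ω. -/

import Mathlib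

/-- The Euclidean Laplacian `Δu = ∑ i ∂²u/∂xᵢ²`. -/
noncomputable def laplacian {n : ℕ} (u : EuclideanSpace ℝ (Fin n) → ℝ)
    (x : EuclideanSpace ℝ (Fin n)) : ℝ :=
  ∑ i : Fin n, fderiv ℝ (fun y => fderiv ℝ u y (EuclideanSpace.single i 1)) x
    (EuclideanSpace.single i 1)

open Filter Topology Set

lemma aux_le_zero {a C : ℝ} (hC : 0 ≤ C) (h : ∀ δ : ℝ, 0 < δ → a ≤ δ * C) : a ≤ 0 := by
  by_contra ha
  push_neg at ha
  have h1 := h (a / (2 * (C + 1))) (by positivity)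
  rw [div_mul_eq_mul_div] at h1
  rw [le_div_iff₀ (by positivity)] at h1
  nlinarith

lemma secondDeriv_nonpos_of_isLocalMax {ψ : ℝ → ℝ} (hψ : ContDiffAt ℝ 2 ψ 0)
    (hmax : IsLocalMax ψ 0) : deriv (deriv ψ) 0 ≤ 0 := by
  by_contra h
  push_neg at h
  have hd0 : deriv ψ 0 = 0 := hmax.deriv_eq_zero
  -- deriv ψ differentiable at 0
  have hfd : ContDiffAt ℝ 1 (fderiv ℝ ψ) 0 := hψ.fderiv_right (le_refl 2)
  have hdψ : DifferentiableAt ℝ (deriv ψ) 0 := by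
    have : deriv ψ = fun t => fderiv ℝ ψ t 1 := rfl
    rw [this]
    exact (ContinuousLinearMap.apply ℝ ℝ (1:ℝ)).differentiableAt.comp 0 (hfd.differentiableAt (by norm_num))
  have hslope : Tendsto (slope (deriv ψ) 0) (𝓝[≠] 0) (𝓝 (deriv (deriv ψ) 0)) :=
    hasDerivAt_iff_tendsto_slope.mp hdψ.hasDerivAt
  have E1 : ∀ᶠ t in 𝓝[≠] (0:ℝ), 0 < slope (deriv ψ) 0 t :=
    hslope.eventually (eventually_gt_nhds h)
  rw [eventually_nhdsWithin_iff] at E1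
  have E2 : ∀ᶠ t in 𝓝 (0:ℝ), ψ t ≤ ψ 0 := hmax
  have E3 : ∀ᶠ t in 𝓝 (0:ℝ), ContDiffAt ℝ 2 ψ t := hψ.eventually (by norm_num)
  have E := (E1.and (E2.and E3))
  rw [Metric.eventually_nhds_iff] at E
  obtain ⟨η, hη, H⟩ := E
  -- on (0, η) : deriv ψ > 0
  have hder_pos : ∀ t ∈ Ioo (0:ℝ) η, 0 < deriv ψ t := by
    intro t ht
    have hd := (H (y := t) (by rw [Real.dist_eq, sub_zero, abs_of_pos ht.1]; exact ht.2)).1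
      (by simpa using ne_of_gt ht.1)
    have : slope (deriv ψ) 0 t = deriv ψ t / t := by
      simp [slope_def_field, hd0]
    rw [this] at hd
    have := mul_pos hd ht.1
    rwa [div_mul_cancel₀] at this
    exact ne_of_gt ht.1
  have hcont : ContinuousOn ψ (Ico 0 η) := by
    intro t ht
    have : |t| < η := by
      rw [abs_of_nonneg ht.1]; exact ht.2
    exact ((H (y := t) (by rwa [Real.dist_eq, sub_zero])).2.2.continuousAt).continuousWithinAt
  have hmono : StrictMonoOn ψ (Ico 0 η) := by
    apply strictMonoOn_of_deriv_pos (convex_Ico 0 η) hcont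
    intro t ht
    rw [interior_Ico] at ht
    exact hder_pos t ht
  have h1 : ψ 0 < ψ (η/2) :=
    hmono ⟨le_refl 0, hη⟩ ⟨by positivity, by linarith⟩ (by positivity)
  have h2 : ψ (η/2) ≤ ψ 0 :=
    (H (y := η/2) (by rw [Real.dist_eq, sub_zero, abs_of_pos (by positivity)]; linarith)).2.1
  linarith
lemma second_directional_nonpos {n : ℕ} {g : EuclideanSpace ℝ (Fin n) → ℝ}
    {z s : EuclideanSpace ℝ (Fin n)} (hg : ContDiffAt ℝ 2 g z) (hmax : IsLocalMax g z) :
    fderiv ℝ (fun y => fderiv ℝ g y s) z s ≤ 0 := by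
  set A : ℝ → EuclideanSpace ℝ (Fin n) := fun t => z + t • s with hA_def
  have hA0 : A 0 = z := by simp [hA_def]
  have hA : ∀ t : ℝ, HasDerivAt A s t := fun t => by
    simpa [hA_def] using ((hasDerivAt_id t).smul_const s).const_add z
  have h2 : Tendsto A (𝓝 0) (𝓝 z) := by
    rw [← hA0]; exact (hA 0).continuousAt
  have hAct : ContDiffAt ℝ 2 A 0 :=
    ((contDiff_const.add (contDiff_id.smul contDiff_const)).contDiffAt : ContDiffAt ℝ 2 A 0)
  have hψ : ContDiffAt ℝ 2 (g ∘ A) 0 := by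
    apply ContDiffAt.comp
    · rw [hA0]; exact hg
    · exact hAct
  have hmaxψ : IsLocalMax (g ∘ A) 0 := by
    have := h2.eventually hmax
    filter_upwards [this] with t ht
    simpa [Function.comp, hA0] using ht
  have key : deriv (deriv (g ∘ A)) 0 = fderiv ℝ (fun y => fderiv ℝ g y s) z s := by
    have Ev : deriv (g ∘ A) =ᶠ[𝓝 (0:ℝ)] fun t => fderiv ℝ g (A t) s := by
      have hg' : ∀ᶠ y in 𝓝 z, ContDiffAt ℝ 2 g y := hg.eventually (by norm_num)
      filter_upwards [h2.eventually hg'] with t ht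
      exact ((ht.differentiableAt (by norm_num)).hasFDerivAt.comp_hasDerivAt t (hA t)).deriv
    rw [Ev.deriv_eq]
    have h1 : DifferentiableAt ℝ (fderiv ℝ g) z := (hg.fderiv_right (m := 1) (le_refl 2)).differentiableAt (by norm_num)
    have hdf : DifferentiableAt ℝ (fun y => fderiv ℝ g y s) z :=
      h1.clm_apply (differentiableAt_const s)
    have h3 : HasFDerivAt (fun y => fderiv ℝ g y s) (fderiv ℝ (fun y => fderiv ℝ g y s) z) (A 0) := by
      rw [hA0]; exact hdf.hasFDerivAt
    exact (h3.comp_hasDerivAt 0 (hA 0)).deriv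
  rw [← key]
  exact secondDeriv_nonpos_of_isLocalMax hψ hmaxψ

lemma laplacian_add_mul {n : ℕ} {f g : EuclideanSpace ℝ (Fin n) → ℝ}
    {x : EuclideanSpace ℝ (Fin n)} (hf : ContDiffAt ℝ 2 f x) (hg : ContDiffAt ℝ 2 g x) (b : ℝ) :
    laplacian (fun y => f y + b * g y) x = laplacian f x + b * laplacian g x := by
  unfold laplacian
  rw [Finset.mul_sum, ← Finset.sum_add_distrib]
  apply Finset.sum_congr rfl
  intro i _
  set s := EuclideanSpace.single (𝕜 := ℝ) i (1:ℝ)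
  have E1 : (fun y => fderiv ℝ (fun y => f y + b * g y) y s)
      =ᶠ[𝓝 x] fun y => fderiv ℝ f y s + b * fderiv ℝ g y s := by
    filter_upwards [hf.eventually (by norm_num), hg.eventually (by norm_num)] with y hfy hgy
    have hfd : DifferentiableAt ℝ f y := hfy.differentiableAt (by norm_num)
    have hgd : DifferentiableAt ℝ g y := hgy.differentiableAt (by norm_num)
    rw [fderiv_fun_add hfd (hgd.const_mul b), fderiv_const_mul hgd b]
    simp
  rw [E1.fderiv_eq]
  have hfd2 : DifferentiableAt ℝ (fun y => fderiv ℝ f y s) x :=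
    ((hf.fderiv_right (m := 1) (le_refl 2)).differentiableAt (by norm_num)).clm_apply (differentiableAt_const s)
  have hgd2 : DifferentiableAt ℝ (fun y => fderiv ℝ g y s) x :=
    ((hg.fderiv_right (m := 1) (le_refl 2)).differentiableAt (by norm_num)).clm_apply (differentiableAt_const s)
  rw [fderiv_fun_add hfd2 (hgd2.const_mul b), fderiv_const_mul hgd2 b]
  simp

lemma laplacian_sq_proj {n : ℕ} (i0 : Fin n) (x : EuclideanSpace ℝ (Fin n)) :
    laplacian (fun y => EuclideanSpace.proj (𝕜 := ℝ) i0 y * EuclideanSpace.proj (𝕜 := ℝ) i0 y) x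
      = 2 := by
  set L := EuclideanSpace.proj (𝕜 := ℝ) i0 with hL
  unfold laplacian
  have hterm : ∀ i : Fin n,
      fderiv ℝ (fun y => fderiv ℝ (fun y => L y * L y) y (EuclideanSpace.single i 1)) x
        (EuclideanSpace.single i 1)
      = 2 * (L (EuclideanSpace.single i 1)) ^ 2 := by
    intro i
    set s := EuclideanSpace.single (𝕜 := ℝ) i (1:ℝ)
    have h1 : (fun y => fderiv ℝ (fun y => L y * L y) y s) = fun y => (2 * L s) * L y := by
      funext y
      rw [(L.hasFDerivAt.fun_mul L.hasFDerivAt).fderiv]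
      simp only [ContinuousLinearMap.add_apply, ContinuousLinearMap.coe_smul',
        Pi.smul_apply, smul_eq_mul]
      ring
    rw [h1, (L.hasFDerivAt.const_mul (2 * L s)).fderiv]
    simp only [ContinuousLinearMap.coe_smul', Pi.smul_apply, smul_eq_mul]
    ring
  rw [Finset.sum_congr rfl (fun i _ => hterm i)]
  have : ∀ i : Fin n, L (EuclideanSpace.single i 1) = if i0 = i then 1 else 0 := by
    intro i
    have : L (EuclideanSpace.single i 1) = (EuclideanSpace.single (𝕜 := ℝ) i (1:ℝ)) i0 := rfl
    rw [this, EuclideanSpace.single_apply]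
  have h4 : ∀ i : Fin n, 2 * (L (EuclideanSpace.single i 1)) ^ 2 = if i0 = i then 2 else 0 := by
    intro i
    rw [this i]
    split <;> norm_num
  rw [Finset.sum_congr rfl (fun i _ => h4 i), Finset.sum_ite_eq]
  simp

set_option maxHeartbeats 1000000 in
/-- Maximum principle via a positive supersolution barrier dominating `u` at infinity. -/
theorem maximum_principle_with_barrier
    (n : ℕ) (hn : 2 ≤ n)
    (Ω : Set (EuclideanSpace ℝ (Fin n)))
    (hΩopen : IsOpen Ω) (hΩne : Ω.Nonempty)
    (c : EuclideanSpace ℝ (Fin n) → ℝ)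
    (hc_cont : ContinuousOn c Ω) (hc_nonneg : ∀ x ∈ Ω, 0 ≤ c x)
    (u : EuclideanSpace ℝ (Fin n) → ℝ)
    (hu_cont : ContinuousOn u (closure Ω))
    (hu_reg : ContDiffOn ℝ 2 u Ω)
    (hu_sub : ∀ x ∈ Ω, c x * u x ≤ laplacian u x)
    (hu_bdry : ∀ x ∈ frontier Ω, u x ≤ 0)
    (hu_bdd : BddAbove (u '' Ω))
    (φ : EuclideanSpace ℝ (Fin n) → ℝ)
    (hφ_cont : ContinuousOn φ (closure Ω))
    (hφ_reg : ContDiffOn ℝ 2 φ Ω)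
    (hφ_super : ∀ x ∈ Ω, laplacian φ x ≤ c x * φ x)
    (hφ_pos : ∀ x ∈ closure Ω, 0 < φ x)
    (hlimsup : ∀ ε > (0:ℝ), ∃ R > (0:ℝ), ∀ x ∈ Ω, R ≤ ‖x‖ → u x ≤ ε * φ x) :
    ∀ x ∈ Ω, u x ≤ 0 := by
  intro x₀ hx₀
  have hφx₀ : 0 < φ x₀ := hφ_pos x₀ (subset_closure hx₀)
  have key : ∀ ε : ℝ, 0 < ε → u x₀ ≤ ε * φ x₀ := by
    intro ε hε
    obtain ⟨R, hR, hRbound⟩ := hlimsup ε hε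
    have hn0 : 0 < n := by omega
    set i0 : Fin n := ⟨0, hn0⟩ with hi0
    set L := EuclideanSpace.proj (𝕜 := ℝ) i0 with hLdef
    set q : EuclideanSpace ℝ (Fin n) → ℝ := fun y => L y * L y with hq
    set v : EuclideanSpace ℝ (Fin n) → ℝ := fun y => u y + (-ε) * φ y with hv
    set R' : ℝ := max R ‖x₀‖ with hR'
    have hR'0 : 0 < R' := lt_of_lt_of_le hR (le_max_left _ _)
    have hq_nonneg : ∀ y, 0 ≤ q y := fun y => mul_self_nonneg _
    have hq_le : ∀ y : EuclideanSpace ℝ (Fin n), q y ≤ ‖y‖ ^ 2 := by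
      intro y
      have h1 : ‖y‖ ^ 2 = ∑ i, ‖y i‖ ^ 2 := by
        rw [EuclideanSpace.norm_eq, Real.sq_sqrt (by positivity)]
      have h2 : q y = ‖y i0‖ ^ 2 := by
        rw [Real.norm_eq_abs, sq_abs, pow_two]; rfl
      rw [h1, h2]
      exact Finset.single_le_sum (f := fun i => ‖y i‖ ^ 2) (fun i _ => by positivity)
        (Finset.mem_univ i0)
    suffices hsuff : ∀ δ : ℝ, 0 < δ → v x₀ ≤ δ * (R' ^ 2) by
      have h0 := aux_le_zero (by positivity) hsuff
      simp only [hv] at h0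
      linarith
    intro δ hδ
    set g : EuclideanSpace ℝ (Fin n) → ℝ := fun y => v y + δ * q y with hg
    set K := closure Ω ∩ Metric.closedBall (0 : EuclideanSpace ℝ (Fin n)) R' with hK
    have hK_cpt : IsCompact K := (isCompact_closedBall _ _).inter_left isClosed_closure
    have hx₀K : x₀ ∈ K := ⟨subset_closure hx₀, by
      rw [Metric.mem_closedBall, dist_zero_right]; exact le_max_right _ _⟩
    have hq_cont : Continuous q := L.continuous.mul L.continuous
    have hv_cont : ContinuousOn v (closure Ω) :=
      hu_cont.add (continuousOn_const.mul hφ_cont)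
    have hg_cont : ContinuousOn g K :=
      (hv_cont.mono inter_subset_left).add
        (continuousOn_const.mul (hq_cont.continuousOn))
    obtain ⟨z, hzK, hzmax⟩ := hK_cpt.exists_isMaxOn ⟨x₀, hx₀K⟩ hg_cont
    have hzcl : z ∈ closure Ω := hzK.1
    have hznorm' : ‖z‖ ≤ R' := by
      have h := hzK.2
      rwa [Metric.mem_closedBall, dist_zero_right] at h
    have hvz : v z ≤ 0 := by
      by_contra hvz'
      push_neg at hvz'
      have hφz : 0 < φ z := hφ_pos z hzcl
      have hzΩ : z ∈ Ω := by
        by_contra hzo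
        have hfr : z ∈ frontier Ω := by
          rw [frontier, hΩopen.interior_eq]
          exact ⟨hzcl, hzo⟩
        have h1 := hu_bdry z hfr
        have h2 : v z ≤ 0 := by simp only [hv]; nlinarith
        linarith
      have hzR : ‖z‖ < R := by
        by_contra hge
        push_neg at hge
        have h1 := hRbound z hzΩ hge
        have h2 : v z ≤ 0 := by simp only [hv]; linarith
        linarith
      have hU : Ω ∩ Metric.ball (0 : EuclideanSpace ℝ (Fin n)) R' ∈ 𝓝 z := by
        apply (hΩopen.inter Metric.isOpen_ball).mem_nhds
        refine ⟨hzΩ, ?_⟩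
        rw [Metric.mem_ball, dist_zero_right]
        exact lt_of_lt_of_le hzR (le_max_left _ _)
      have hKnhds : K ∈ 𝓝 z := by
        apply Filter.mem_of_superset hU
        intro y hy
        exact ⟨subset_closure hy.1, Metric.ball_subset_closedBall hy.2⟩
      have hloc : IsLocalMax g z := hzmax.isLocalMax hKnhds
      have huz : ContDiffAt ℝ 2 u z := hu_reg.contDiffAt (hΩopen.mem_nhds hzΩ)
      have hφz2 : ContDiffAt ℝ 2 φ z := hφ_reg.contDiffAt (hΩopen.mem_nhds hzΩ)
      have hvz2 : ContDiffAt ℝ 2 v z := huz.add (contDiffAt_const.mul hφz2)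
      have hqz2 : ContDiffAt ℝ 2 q z := (L.contDiff.mul L.contDiff).contDiffAt
      have hgz2 : ContDiffAt ℝ 2 g z := hvz2.add (contDiffAt_const.mul hqz2)
      have hl1 : laplacian g z = laplacian v z + δ * laplacian q z :=
        laplacian_add_mul hvz2 hqz2 δ
      have hl2 : laplacian v z = laplacian u z + (-ε) * laplacian φ z :=
        laplacian_add_mul huz hφz2 (-ε)
      have hl3 : laplacian q z = 2 := laplacian_sq_proj i0 z
      have hlow : 2 * δ ≤ laplacian g z := by
        rw [hl1, hl2, hl3]
        have h1 := hu_sub z hzΩ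
        have h2 := hφ_super z hzΩ
        have h3 := hc_nonneg z hzΩ
        have h4 : 0 < u z + (-ε) * φ z := by simp only [hv] at hvz'; linarith
        have e1 : (-ε) * (c z * φ z) ≤ (-ε) * laplacian φ z :=
          mul_le_mul_of_nonpos_left h2 (neg_nonpos.mpr hε.le)
        have e2 : 0 ≤ c z * (u z + (-ε) * φ z) := mul_nonneg h3 (le_of_lt h4)
        have e3 : c z * (u z + (-ε) * φ z) = c z * u z + (-ε) * (c z * φ z) := by ring
        linarith
      have hupp : laplacian g z ≤ 0 := by
        unfold laplacian
        apply Finset.sum_nonpos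
        intro i _
        exact second_directional_nonpos hgz2 hloc
      linarith
    have h5 : g x₀ ≤ g z := hzmax hx₀K
    have h6 : g z ≤ δ * R' ^ 2 := by
      have hqz : q z ≤ R' ^ 2 :=
        le_trans (hq_le z) (pow_le_pow_left₀ (norm_nonneg z) hznorm' 2)
      have e4 : δ * q z ≤ δ * R' ^ 2 := mul_le_mul_of_nonneg_left hqz hδ.le
      simp only [hg]
      linarith
    have h7 : v x₀ ≤ g x₀ := by
      have e5 : 0 ≤ δ * q x₀ := mul_nonneg hδ.le (hq_nonneg x₀)
      simp only [hg]
      linarith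
    simp only [hg] at h5 h6 h7
    linarith
  have hfin := aux_le_zero (le_of_lt hφx₀) key
  linarith
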